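/- arXiv:math/0208224 — 8 statements merged into one kernel-verified Lean document; each statement's English description precedes it below -/
import Mathlib

section
/- If a set of reals X satisfies S1(B,B) (for each sequence of countable Borel covers of X one can select one member from each so that the selections cover X), then every subset Y of X also satisfies S1(B,B). -/
/-- `U` is a countable Borel cover of `X`: an ℕ-indexed family of Borel sets whose
union contains `X`, no single member of which contains `X`. -/
def IsCtblBorelCover (X : Set ℝ) (U : ℕ → Set ℝ) : Prop :=
  (∀ n, MeasurableSet (U n)) ∧ X ⊆ ⋃ n, U n ∧ ∀ n, ¬ X ⊆ U n

/-- The selection principle S1(B,B). -/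
def S1BB (X : Set ℝ) : Prop :=
  ∀ U : ℕ → ℕ → Set ℝ, (∀ n, IsCtblBorelCover X (U n)) →
    ∃ f : ℕ → ℕ, X ⊆ ⋃ n, U n (f n)

theorem stmt0 (X Y : Set ℝ) (hXY : Y ⊆ X) (hX : S1BB X) : S1BB Y := by
  intro U hU
  set V : ℕ → ℕ → Set ℝ := fun n k => U n k ∪ (⋃ j, U n j)ᶜ with hV
  have hVc : ∀ n, IsCtblBorelCover X (V n) := by
    intro n
    obtain ⟨hmeas, hcov, hnot⟩ := hU n
    refine ⟨fun k => (hmeas k).union (MeasurableSet.iUnion hmeas).compl, ?_, ?_⟩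
    · intro x _
      by_cases hx : x ∈ ⋃ j, U n j
      · obtain ⟨j, hj⟩ := Set.mem_iUnion.mp hx
        exact Set.mem_iUnion.mpr ⟨j, Or.inl hj⟩
      · exact Set.mem_iUnion.mpr ⟨0, Or.inr hx⟩
    · intro k hk
      apply hnot k
      intro y hy
      rcases hk (hXY hy) with h | h
      · exact h
      · exact absurd (hcov hy) h
  obtain ⟨f, hf⟩ := hX V hVc
  refine ⟨f, fun y hy => ?_⟩
  have hyX : y ∈ ⋃ n, V n (f n) := hf (hXY hy)
  obtain ⟨n, hn⟩ := Set.mem_iUnion.mp hyX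
  have hyU : y ∈ ⋃ j, U n j := (hU n).2.1 hy
  refine Set.mem_iUnion.mpr ⟨n, ?_⟩
  rcases hn with h | h
  · exact h
  · exact absurd hyU h
end

section
/- If X satisfies S1(B_Γ, B_Γ) — for every sequence of countable Borel γ-covers of X one can pick one member from each so that the chosen sequence is a γ-cover of X — then every subset of X satisfies S1(B_Γ, B_Γ). -/
open Filter

/-- `U` is a countable Borel γ-cover of `X`: each member is Borel, no member
contains `X`, and every point of `X` lies in all but finitely many members. -/
def IsBorelGammaCover (X : Set ℝ) (U : ℕ → Set ℝ) : Prop :=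
  (∀ n, MeasurableSet (U n)) ∧ (∀ n, ¬ X ⊆ U n) ∧
    ∀ x ∈ X, ∀ᶠ n in atTop, x ∈ U n

/-- The selection principle S1(B_Γ, B_Γ). -/
def S1BGBG (X : Set ℝ) : Prop :=
  ∀ U : ℕ → ℕ → Set ℝ, (∀ n, IsBorelGammaCover X (U n)) →
    ∃ f : ℕ → ℕ, IsBorelGammaCover X (fun n => U n (f n))

theorem stmt2 (X Y : Set ℝ) (hXY : Y ⊆ X) (hX : S1BGBG X) : S1BGBG Y := by
  intro U hU
  set B : ℕ → Set ℝ := fun n => ⋃ m, ⋂ k, ⋂ _ : m ≤ k, U n k with hB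
  have hBmeas : ∀ n, MeasurableSet (B n) := fun n =>
    MeasurableSet.iUnion fun m => MeasurableSet.iInter fun k =>
      MeasurableSet.iInter fun _ => (hU n).1 k
  have hmemB : ∀ n x, x ∈ B n ↔ ∀ᶠ k in atTop, x ∈ U n k := by
    intro n x
    simp [hB, eventually_atTop, Set.mem_iUnion, Set.mem_iInter]
  have hYB : ∀ n, Y ⊆ B n := fun n y hy => (hmemB n y).2 ((hU n).2.2 y hy)
  set W : ℕ → ℕ → Set ℝ := fun n k => U n k ∪ (B n)ᶜ with hW
  have hWcov : ∀ n, IsBorelGammaCover X (W n) := by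
    intro n
    refine ⟨fun k => ((hU n).1 k).union (hBmeas n).compl, fun k hsub => ?_, ?_⟩
    · obtain ⟨y, hy, hny⟩ := Set.not_subset.1 ((hU n).2.1 k)
      exact hny ((hsub (hXY hy)).resolve_right fun h => h (hYB n hy))
    · intro x hx
      by_cases hxB : x ∈ B n
      · exact ((hmemB n x).1 hxB).mono fun k hk => Or.inl hk
      · exact Filter.Eventually.of_forall fun k => Or.inr hxB
  obtain ⟨f, hf⟩ := hX W hWcov
  refine ⟨f, fun n => (hU n).1 (f n), fun n => (hU n).2.1 (f n), fun y hy => ?_⟩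
  exact (hf.2.2 y (hXY hy)).mono fun n hn => hn.resolve_right fun h => h (hYB n hy)
end

section
/- Let J be a collection of subsets of ℝ that is closed under taking subsets and under taking continuous images (if A ∈ J and f : A → ℝ is continuous then f[A] ∈ J). If the closed unit interval [0,1] belongs to J, then J = P(ℝ), i.e. every subset of ℝ belongs to J. -/
open Real Set

theorem stmt3 (J : Set (Set ℝ))
    (hsub : ∀ A B : Set ℝ, A ∈ J → B ⊆ A → B ∈ J)
    (himg : ∀ A : Set ℝ, A ∈ J → ∀ f : ℝ → ℝ, ContinuousOn f A → f '' A ∈ J)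
    (hunit : Set.Icc (0 : ℝ) 1 ∈ J) :
    J = Set.univ := by
  have h1 : Set.Ioo (0 : ℝ) 1 ∈ J := hsub _ _ hunit Set.Ioo_subset_Icc_self
  have hπ : (0:ℝ) < π := Real.pi_pos
  have h2 : (fun x : ℝ => π * x - π / 2) '' Set.Ioo 0 1 = Set.Ioo (-(π/2)) (π/2) := by
    ext y
    simp only [Set.mem_image, Set.mem_Ioo]
    constructor
    · rintro ⟨x, ⟨hx0, hx1⟩, rfl⟩
      constructor <;> nlinarith
    · rintro ⟨hy0, hy1⟩
      refine ⟨(y + π/2) / π, ⟨?_, ?_⟩, ?_⟩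
      · apply div_pos (by linarith) hπ
      · rw [div_lt_one hπ]; linarith
      · field_simp; ring
  have h3 : Set.Ioo (-(π/2)) (π/2) ∈ J := by
    rw [← h2]
    exact himg _ h1 _ (Continuous.continuousOn (by continuity))
  have h4 : (Set.univ : Set ℝ) ∈ J := by
    have := himg _ h3 Real.tan Real.continuousOn_tan_Ioo
    rwa [Real.image_tan_Ioo] at this
  ext A
  simp only [Set.mem_univ, iff_true]
  exact hsub _ _ h4 (Set.subset_univ A)
end

section
/- Let ℕ* be the one-point compactification of ℕ, and let Inc ⊆ (ℕ*)^ℕ be the set of nondecreasing functions f : ℕ → ℕ* such that whenever f(n) < ∞ one has f(n) < f(n+1). Then Inc, with the product topology, is a compact, zero-dimensional, metrizable space with no isolated points; consequently Inc is homeomorphic to the Cantor space {0,1}^ℕ. -/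
open OnePoint

/-- `a ≤ b` in `ℕ ∪ {∞}`: whenever `b` is a natural number `m`,
`a` is a natural number `m' ≤ m` (everything is `≤ ∞`). -/
def opLE (a b : OnePoint ℕ) : Prop :=
  ∀ m : ℕ, b = (m : OnePoint ℕ) → ∃ m' : ℕ, a = (m' : OnePoint ℕ) ∧ m' ≤ m

/-- `a < b` in `ℕ ∪ {∞}`, for `a` a natural number: whenever `b` is a natural
number `m`, `a` is a natural number `m' < m`. -/
def opLT (a b : OnePoint ℕ) : Prop :=
  ∀ m : ℕ, b = (m : OnePoint ℕ) → ∃ m' : ℕ, a = (m' : OnePoint ℕ) ∧ m' < m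

/-- The set of nondecreasing functions `ℕ → ℕ ∪ {∞}` which are strictly
increasing where finite. -/
def Inc : Set (ℕ → OnePoint ℕ) :=
  {f | (∀ n, opLE (f n) (f (n + 1))) ∧
       ∀ n, (∃ m : ℕ, f n = (m : OnePoint ℕ)) → opLT (f n) (f (n + 1))}

namespace Stmt6Aux

/-- number of `true` values of `g` below `k` -/
def cnt (g : ℕ → Bool) (k : ℕ) : ℕ := Nat.count (fun j => g j = true) k

lemma cnt_succ (g : ℕ → Bool) (n : ℕ) :
    cnt g (n + 1) = cnt g n + if g n = true then 1 else 0 :=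
  Nat.count_succ _ _

lemma cnt_mono (g : ℕ → Bool) : Monotone (cnt g) := Nat.count_monotone _

lemma cnt_congr {g g' : ℕ → Bool} (k : ℕ) (h : ∀ j < k, g j = g' j) :
    cnt g k = cnt g' k := by
  induction k with
  | zero => rfl
  | succ k ih =>
    rw [cnt_succ, cnt_succ, ih (fun j hj => h j (Nat.lt_succ_of_lt hj)),
      h k (Nat.lt_succ_self k)]

lemma cnt_stable (g : ℕ → Bool) (a b : ℕ) (hab : a ≤ b)
    (h : ∀ j, a ≤ j → j < b → ¬ g j = true) : cnt g b = cnt g a := by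
  induction b, hab using Nat.le_induction with
  | base => rfl
  | succ b hb ih =>
    rw [cnt_succ, if_neg (h b hb (Nat.lt_succ_self b)),
      ih (fun j h1 h2 => h j h1 (Nat.lt_succ_of_lt h2)), Nat.add_zero]

open scoped Classical in
/-- the `n`-th (0-indexed) index where `g` is `true`, or `∞` if there is none -/
noncomputable def F (g : ℕ → Bool) (n : ℕ) : OnePoint ℕ :=
  if h : ∃ k, g k = true ∧ cnt g k = n then ((Nat.find h : ℕ) : OnePoint ℕ) else ∞

lemma F_eq_coe_iff {g : ℕ → Bool} {n m : ℕ} :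
    F g n = (m : OnePoint ℕ) ↔ g m = true ∧ cnt g m = n := by
  constructor
  · intro h
    rw [F] at h
    split_ifs at h with hex
    · obtain ⟨h1, h2⟩ := Nat.find_spec hex
      have : Nat.find hex = m := OnePoint.coe_eq_coe.1 h
      rw [this] at h1 h2
      exact ⟨h1, h2⟩
    · exact absurd h (OnePoint.infty_ne_coe m)
  · rintro ⟨h1, h2⟩
    have hex : ∃ k, g k = true ∧ cnt g k = n := ⟨m, h1, h2⟩
    rw [F, dif_pos hex]
    obtain ⟨h1', h2'⟩ := Nat.find_spec hex
    exact OnePoint.coe_eq_coe.2 (Nat.count_injective h1' h1 (h2'.trans h2.symm))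

lemma exists_of_lt_cnt {g : ℕ → Bool} {m n : ℕ} (h : n < cnt g m) :
    ∃ k, k < m ∧ g k = true ∧ cnt g k = n := by
  induction m with
  | zero => simp [cnt, Nat.count_zero] at h
  | succ m ih =>
    by_cases hm : n < cnt g m
    · obtain ⟨k, hk, h1, h2⟩ := ih hm
      exact ⟨k, Nat.lt_succ_of_lt hk, h1, h2⟩
    · rw [cnt_succ] at h
      by_cases hgm : g m = true
      · rw [if_pos hgm] at h
        exact ⟨m, Nat.lt_succ_self m, hgm, by omega⟩
      · rw [if_neg hgm] at h; omega

lemma F_mem_Inc (g : ℕ → Bool) : F g ∈ Inc := by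
  constructor
  · intro n m hm
    obtain ⟨h1, h2⟩ := F_eq_coe_iff.1 hm
    obtain ⟨k, hk, hk1, hk2⟩ := exists_of_lt_cnt (g := g) (m := m) (n := n) (by omega)
    exact ⟨k, F_eq_coe_iff.2 ⟨hk1, hk2⟩, hk.le⟩
  · intro n _ m hm
    obtain ⟨h1, h2⟩ := F_eq_coe_iff.1 hm
    obtain ⟨k, hk, hk1, hk2⟩ := exists_of_lt_cnt (g := g) (m := m) (n := n) (by omega)
    exact ⟨k, F_eq_coe_iff.2 ⟨hk1, hk2⟩, hk⟩

lemma cyl_mem_nhds (g : ℕ → Bool) (N : ℕ) :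
    {g' : ℕ → Bool | ∀ j < N, g' j = g j} ∈ nhds g := by
  have h : (↑(Finset.range N) : Set ℕ).pi (fun j => {g j}) ∈ nhds g :=
    set_pi_mem_nhds (Finset.finite_toSet _)
      (fun j _ => (isOpen_discrete {g j}).mem_nhds rfl)
  refine Filter.mem_of_superset h ?_
  intro g' hg' j hj
  exact hg' j (by simpa using hj)

lemma F_continuous (n : ℕ) : Continuous (fun g => F g n) := by
  rw [continuous_iff_continuousAt]
  intro g
  rw [ContinuousAt]
  cases hF : F g n with
  | coe k =>
    have key : ∀ g' : ℕ → Bool, (∀ j < k + 1, g' j = g j) → F g' n = (k : OnePoint ℕ) := by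
      intro g' hg'
      obtain ⟨h1, h2⟩ := F_eq_coe_iff.1 hF
      refine F_eq_coe_iff.2 ⟨?_, ?_⟩
      · rw [hg' k (Nat.lt_succ_self k)]; exact h1
      · rw [cnt_congr k (fun j hj => hg' j (Nat.lt_succ_of_lt hj))]; exact h2
    refine Filter.Tendsto.congr' ?_ (tendsto_const_nhds (x := (k : OnePoint ℕ)))
    filter_upwards [cyl_mem_nhds g (k + 1)] with g' hg'
    exact (key g' hg').symm
  | infty =>
    rw [OnePoint.hasBasis_nhds_infty.tendsto_right_iff]
    rintro s ⟨-, hsc⟩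
    have hsfin : s.Finite := hsc.finite_of_discrete
    obtain ⟨N, hN⟩ : ∃ N, ∀ a ∈ s, a < N := by
      rcases hsfin.bddAbove with ⟨N, hNbdd⟩
      exact ⟨N + 1, fun a ha => Nat.lt_succ_of_le (hNbdd ha)⟩
    have hnex : ¬ ∃ k, g k = true ∧ cnt g k = n := by
      intro hex
      rw [F, dif_pos hex] at hF
      exact OnePoint.coe_ne_infty _ hF
    have hcnt : cnt g N ≤ n := by
      by_contra hc
      obtain ⟨k, _, h1, h2⟩ := exists_of_lt_cnt (g := g) (m := N) (n := n) (by omega)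
      exact hnex ⟨k, h1, h2⟩
    filter_upwards [cyl_mem_nhds g N] with g' hg'
    cases hF' : F g' n with
    | infty => right; rfl
    | coe k =>
      left
      refine ⟨k, ?_, rfl⟩
      intro hks
      have hkN : k < N := hN k hks
      obtain ⟨h1, h2⟩ := F_eq_coe_iff.1 hF'
      have hstep : cnt g' (k + 1) = n + 1 := by rw [cnt_succ, if_pos h1, h2]
      have hmono : cnt g' (k + 1) ≤ cnt g' N := cnt_mono g' hkN
      have heq : cnt g' N = cnt g N := cnt_congr N hg'
      omega

lemma F_injective : Function.Injective F := by
  intro g g' h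
  have key : ∀ g₁ g₂ : ℕ → Bool, F g₁ = F g₂ → ∀ k, g₁ k = true → g₂ k = true := by
    intro g₁ g₂ hF k h1
    have h2 : F g₁ (cnt g₁ k) = (k : OnePoint ℕ) := F_eq_coe_iff.2 ⟨h1, rfl⟩
    rw [hF] at h2
    exact (F_eq_coe_iff.1 h2).1
  funext k
  by_cases hg : g k = true
  · rw [hg, key g g' h k hg]
  · have hg' : ¬ g' k = true := fun hc => hg (key g' g h.symm k hc)
    rw [Bool.not_eq_true] at hg hg'
    rw [hg, hg']

lemma incr_step (f : ℕ → OnePoint ℕ) (hf : f ∈ Inc) :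
    ∀ (d i k : ℕ), f (i + d) = (k : OnePoint ℕ) →
      ∃ a : ℕ, f i = (a : OnePoint ℕ) ∧ a + d ≤ k := by
  intro d
  induction d with
  | zero => exact fun i k h => ⟨k, h, le_refl k⟩
  | succ d ih =>
    intro i k h
    obtain ⟨b, hb, _⟩ := hf.1 (i + d) k h
    obtain ⟨b', hb', hb'k⟩ := hf.2 (i + d) ⟨b, hb⟩ k h
    obtain ⟨a, ha, had⟩ := ih i b' hb'
    exact ⟨a, ha, by omega⟩

lemma F_surjective : ∀ f ∈ Inc, ∃ g, F g = f := by
  classical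
  intro f hf
  set g : ℕ → Bool := fun k => decide (∃ i, f i = (k : OnePoint ℕ)) with hgdef
  have gspec : ∀ k, g k = true ↔ ∃ i, f i = (k : OnePoint ℕ) := fun k => by
    simp [hgdef]
  have key : ∀ (m k : ℕ), f m = (k : OnePoint ℕ) → cnt g k = m := by
    intro m
    induction m with
    | zero =>
      intro k hk
      have hnone : ∀ j < k, ¬ g j = true := by
        intro j hj hgj
        obtain ⟨i, hi⟩ := (gspec j).1 hgj
        obtain ⟨a, ha, hak⟩ := incr_step f hf i 0 j (by simpa [Nat.zero_add] using hi)
        rw [hk] at ha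
        have := OnePoint.coe_eq_coe.1 ha
        omega
      rw [cnt, Nat.count_eq_card_filter_range, Finset.card_eq_zero,
        Finset.filter_eq_empty_iff]
      intro j hj
      exact hnone j (Finset.mem_range.1 hj)
    | succ m ih =>
      intro k hk
      obtain ⟨a, ha, hak⟩ := incr_step f hf 1 m k hk
      have hcnta : cnt g a = m := ih a ha
      have hga : g a = true := (gspec a).2 ⟨m, ha⟩
      have hmid : ∀ j, a + 1 ≤ j → j < k → ¬ g j = true := by
        intro j hj1 hj2 hgj
        obtain ⟨i, hi⟩ := (gspec j).1 hgj
        rcases le_or_gt i m with him | him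
        · obtain ⟨a', ha', h'⟩ := incr_step f hf (m - i) i a
            (by rw [show i + (m - i) = m by omega]; exact ha)
          rw [hi] at ha'
          have := OnePoint.coe_eq_coe.1 ha'
          omega
        · obtain ⟨a', ha', h'⟩ := incr_step f hf (i - (m + 1)) (m + 1) j
            (by rw [show m + 1 + (i - (m + 1)) = i by omega]; exact hi)
          rw [hk] at ha'
          have := OnePoint.coe_eq_coe.1 ha'
          omega
      have h1 : cnt g (a + 1) = m + 1 := by rw [cnt_succ, if_pos hga, hcnta]
      have h2 : cnt g k = cnt g (a + 1) := cnt_stable g (a + 1) k (by omega) hmid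
      omega
  refine ⟨g, funext fun n => ?_⟩
  cases hfn : f n with
  | coe k => exact F_eq_coe_iff.2 ⟨(gspec k).2 ⟨n, hfn⟩, key n k hfn⟩
  | infty =>
    cases hF : F g n with
    | infty => rfl
    | coe k =>
      exfalso
      obtain ⟨h1, h2⟩ := F_eq_coe_iff.1 hF
      obtain ⟨i, hi⟩ := (gspec k).1 h1
      have hik := key i k hi
      have : i = n := by omega
      rw [this] at hi
      rw [hfn] at hi
      exact OnePoint.infty_ne_coe k hi

lemma cantor_perfect (y : ℕ → Bool) : y ∈ closure ({y}ᶜ : Set (ℕ → Bool)) := by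
  rw [mem_closure_iff]
  intro U hU hyU
  obtain ⟨I, u, h1, h2⟩ := isOpen_pi_iff.1 hU y hyU
  obtain ⟨n, hn⟩ := Infinite.exists_notMem_finset I
  refine ⟨Function.update y n (!(y n)), h2 ?_, ?_⟩
  · intro i hi
    rw [Function.update_of_ne (by rintro rfl; exact hn hi)]
    exact (h1 i hi).2
  · simp only [Set.mem_compl_iff, Set.mem_singleton_iff]
    intro heq
    have := congrFun heq n
    rw [Function.update_self] at this
    simp at this

end Stmt6Aux

open Stmt6Aux

theorem stmt6 :
    CompactSpace ↥Inc ∧ TotallyDisconnectedSpace ↥Inc ∧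
    TopologicalSpace.MetrizableSpace ↥Inc ∧
    (∀ x : ↥Inc, (nhdsWithin x {x}ᶜ).NeBot) ∧
    Nonempty (↥Inc ≃ₜ (ℕ → Bool)) := by
  classical
  have hcont : Continuous (fun g : ℕ → Bool => F g) := continuous_pi F_continuous
  have hbij : Function.Bijective (fun g : ℕ → Bool => (⟨F g, F_mem_Inc g⟩ : ↥Inc)) := by
    constructor
    · intro g g' hgg'
      exact F_injective (congrArg Subtype.val hgg')
    · rintro ⟨f, hfInc⟩
      obtain ⟨g, hg⟩ := F_surjective f hfInc
      exact ⟨g, Subtype.ext hg⟩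
  let E : (ℕ → Bool) ≃ ↥Inc := Equiv.ofBijective _ hbij
  have hEcont : Continuous E := Continuous.subtype_mk hcont _
  let h : (ℕ → Bool) ≃ₜ ↥Inc := hEcont.homeoOfEquivCompactToT2
  have hcomp : CompactSpace ↥Inc := h.compactSpace
  refine ⟨hcomp, ?_, ?_, ?_, ⟨h.symm⟩⟩
  · exact (h.symm.isEmbedding.isTotallyDisconnected_range).1
      (isTotallyDisconnected_of_totallyDisconnectedSpace _)
  · exact h.symm.isEmbedding.metrizableSpace
  · intro x
    rw [← mem_closure_iff_nhdsWithin_neBot]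
    have hcant := cantor_perfect (h.symm x)
    have himg : h '' ({h.symm x}ᶜ) = ({x}ᶜ : Set ↥Inc) := by
      rw [Set.image_compl_eq h.bijective, Set.image_singleton, h.apply_symm_apply]
    rw [← himg, ← h.image_closure]
    exact ⟨h.symm x, hcant, h.apply_symm_apply x⟩
end

section
/- Let Inc be the space of nondecreasing functions ℕ → ℕ ∪ {∞} strictly increasing where finite (a compact subspace of (ℕ∪{∞})^ℕ), and let Q ⊆ Inc be the set of eventually-∞ elements. If A ⊆ Inc ∩ ℕ^ℕ is strongly unbounded with |A| = κ, then A is κ-concentrated on Q: for every open set U ⊇ Q in Inc, |A \ U| < κ. -/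
open Filter OnePoint

/-- The set of eventually-∞ elements of `Inc`. -/
def Qinf : Set (ℕ → OnePoint ℕ) :=
  {f ∈ Inc | ∀ᶠ n in atTop, f n = (∞ : OnePoint ℕ)}

def LeStar (f g : ℕ → ℕ) : Prop := ∀ᶠ n in atTop, f n ≤ g n

lemma singleton_open (m : ℕ) : IsOpen {((m : ℕ) : OnePoint ℕ)} := by
  have := OnePoint.isOpenEmbedding_coe (X := ℕ)
  simpa [Set.image_singleton] using this.isOpenMap {m} (isOpen_discrete _)

lemma isClosed_Inc : IsClosed Inc := by
  have h1 : ∀ n : ℕ, IsClosed {f : ℕ → OnePoint ℕ | opLE (f n) (f (n+1))} := by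
    intro n
    rw [← isOpen_compl_iff]
    have : {f : ℕ → OnePoint ℕ | opLE (f n) (f (n+1))}ᶜ =
        ⋃ m : ℕ, ((fun f : ℕ → OnePoint ℕ => f (n+1)) ⁻¹' {((m : ℕ) : OnePoint ℕ)} ∩
          ⋂ m' ∈ Finset.range (m+1),
            ((fun f : ℕ → OnePoint ℕ => f n) ⁻¹' {((m' : ℕ) : OnePoint ℕ)})ᶜ) := by
      ext f
      simp only [Set.mem_compl_iff, Set.mem_setOf_eq, opLE, Set.mem_iUnion,
        Set.mem_inter_iff, Set.mem_preimage, Set.mem_singleton_iff, Set.mem_iInter,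
        Set.mem_compl_iff, Finset.mem_range, not_forall]
      constructor
      · rintro ⟨m, hm, hne⟩
        refine ⟨m, hm, fun m' hm' hfn => ?_⟩
        exact hne ⟨m', hfn, by omega⟩
      · rintro ⟨m, hm, h⟩
        refine ⟨m, hm, ?_⟩
        rintro ⟨m', hfn, hle⟩
        exact h m' (by omega) hfn
    rw [this]
    refine isOpen_iUnion fun m => (IsOpen.inter ?_ ?_)
    · exact (singleton_open m).preimage (continuous_apply (n+1))
    · exact isOpen_biInter_finset fun m' _ =>
        ((isClosed_singleton.preimage (continuous_apply n)).isOpen_compl)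
  have h2 : ∀ n : ℕ, IsClosed {f : ℕ → OnePoint ℕ |
      (∃ m : ℕ, f n = (m : OnePoint ℕ)) → opLT (f n) (f (n+1))} := by
    intro n
    rw [← isOpen_compl_iff]
    have : {f : ℕ → OnePoint ℕ |
        (∃ m : ℕ, f n = (m : OnePoint ℕ)) → opLT (f n) (f (n+1))}ᶜ =
        ⋃ m0 : ℕ, ⋃ m ∈ Finset.range (m0+1),
          ((fun f : ℕ → OnePoint ℕ => f n) ⁻¹' {((m0 : ℕ) : OnePoint ℕ)} ∩
           (fun f : ℕ → OnePoint ℕ => f (n+1)) ⁻¹' {((m : ℕ) : OnePoint ℕ)}) := by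
      ext f
      simp only [Set.mem_compl_iff, Set.mem_setOf_eq, opLT, Set.mem_iUnion,
        Set.mem_inter_iff, Set.mem_preimage, Set.mem_singleton_iff, Finset.mem_range,
        not_forall]
      constructor
      · rintro ⟨⟨m0, hm0⟩, m, hm, hne⟩
        refine ⟨m0, m, ?_, hm0, hm⟩
        by_contra hlt
        exact hne ⟨m0, hm0, by omega⟩
      · rintro ⟨m0, m, hle, hfn, hfn1⟩
        refine ⟨⟨m0, hfn⟩, m, hfn1, ?_⟩
        rintro ⟨m', hm', hlt⟩
        rw [hfn] at hm'
        have : m0 = m' := OnePoint.coe_injective hm'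
        omega
    rw [this]
    refine isOpen_iUnion fun m0 => isOpen_biUnion fun m _ => IsOpen.inter ?_ ?_
    · exact (singleton_open m0).preimage (continuous_apply n)
    · exact (singleton_open m).preimage (continuous_apply (n+1))
  have : Inc = (⋂ n, {f : ℕ → OnePoint ℕ | opLE (f n) (f (n+1))}) ∩
      ⋂ n, {f : ℕ → OnePoint ℕ |
        (∃ m : ℕ, f n = (m : OnePoint ℕ)) → opLT (f n) (f (n+1))} := by
    ext f
    simp [Inc, Set.mem_iInter, forall_and]
  rw [this]
  exact ((isClosed_iInter h1).inter (isClosed_iInter h2))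

lemma inc_all_finite {x : ℕ → OnePoint ℕ} (hx : x ∈ Inc)
    (hnq : ¬ ∀ᶠ n in atTop, x n = (∞ : OnePoint ℕ)) :
    ∀ n, ∃ m : ℕ, x n = (m : OnePoint ℕ) := by
  have step : ∀ n, (∃ m : ℕ, x (n+1) = (m : OnePoint ℕ)) →
      ∃ m : ℕ, x n = (m : OnePoint ℕ) := by
    rintro n ⟨m, hm⟩
    obtain ⟨m', hm', -⟩ := hx.1 n m hm
    exact ⟨m', hm'⟩
  have down : ∀ k n, (∃ m : ℕ, x (n+k) = (m : OnePoint ℕ)) →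
      ∃ m : ℕ, x n = (m : OnePoint ℕ) := by
    intro k
    induction k with
    | zero => intro n h; simpa using h
    | succ k ih =>
      intro n h
      exact ih n (step (n+k) h)
  intro n
  rw [Filter.not_eventually] at hnq
  obtain ⟨N, hN, hne⟩ := (hnq.and_eventually (eventually_ge_atTop n)).exists
  obtain ⟨m, hm⟩ : ∃ m : ℕ, x N = (m : OnePoint ℕ) := by
    cases hxN : x N with
    | infty => exact absurd hxN hN
    | coe m => exact ⟨m, rfl⟩
  exact down (N - n) n ⟨m, by rwa [show n + (N - n) = N by omega]⟩

theorem stmt10 (A : Set (ℕ → ℕ))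
    (hAInc : ∀ a ∈ A, (fun n => ((a n : ℕ) : OnePoint ℕ)) ∈ Inc)
    (hsu : ∀ f : ℕ → ℕ, Cardinal.mk ↥{g ∈ A | LeStar g f} < Cardinal.mk ↥A) :
    ∀ U : Set (ℕ → OnePoint ℕ), IsOpen U → Qinf ⊆ U →
      Cardinal.mk ↥{a ∈ A | (fun n => ((a n : ℕ) : OnePoint ℕ)) ∉ U} <
        Cardinal.mk ↥A := by
  intro U hU hQU
  set B : Set (ℕ → ℕ) := {a ∈ A | (fun n => ((a n : ℕ) : OnePoint ℕ)) ∉ U} with hB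
  set K := closure ((fun a : ℕ → ℕ => fun n => ((a n : ℕ) : OnePoint ℕ)) '' B) with hK
  have hKInc : K ⊆ Inc :=
    closure_minimal (by rintro _ ⟨a, ha, rfl⟩; exact hAInc a ha.1) isClosed_Inc
  have hKU : K ⊆ Uᶜ :=
    closure_minimal (by rintro _ ⟨a, ha, rfl⟩; exact ha.2) hU.isClosed_compl
  have hKcomp : IsCompact K := isClosed_closure.isCompact
  have hfin : ∀ x ∈ K, ∀ n, ∃ m : ℕ, x n = (m : OnePoint ℕ) := by
    intro x hx
    refine inc_all_finite (hKInc hx) fun hev => ?_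
    exact (hKU hx) (hQU ⟨hKInc hx, hev⟩)
  have hbound : ∀ n : ℕ, ∃ t : Finset ℕ, ∀ x ∈ K, ∃ m ∈ t, x n = (m : OnePoint ℕ) := by
    intro n
    have hcover : K ⊆ ⋃ m : ℕ,
        (fun x : ℕ → OnePoint ℕ => x n) ⁻¹' {((m : ℕ) : OnePoint ℕ)} := by
      intro x hx
      obtain ⟨m, hm⟩ := hfin x hx n
      exact Set.mem_iUnion.2 ⟨m, hm⟩
    obtain ⟨t, ht⟩ := hKcomp.elim_finite_subcover _
      (fun m => (singleton_open m).preimage (continuous_apply n)) hcover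
    refine ⟨t, fun x hx => ?_⟩
    obtain ⟨m, hm, hx'⟩ := Set.mem_iUnion₂.1 (ht hx)
    exact ⟨m, hm, hx'⟩
  choose t ht using hbound
  have hBsub : B ⊆ {g ∈ A | LeStar g (fun n => (t n).sup id)} := by
    intro a ha
    refine ⟨ha.1, Filter.Eventually.of_forall fun n => ?_⟩
    have hmem : (fun n => ((a n : ℕ) : OnePoint ℕ)) ∈ K :=
      subset_closure ⟨a, ha, rfl⟩
    obtain ⟨m, hm, heq⟩ := ht n _ hmem
    have ham : a n = m := OnePoint.coe_injective heq
    rw [ham]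
    exact Finset.le_sup (f := id) hm
  exact lt_of_le_of_lt (Cardinal.mk_le_mk_of_subset hBsub) (hsu _)
end

section
/- Let X be a set of reals, Q = {q_n : n ∈ ℕ} a countable subset of X, κ a cardinal, and A = X \ Q. Suppose that for every open U ⊇ Q we have |A \ U| < κ, and suppose every set of reals of size < κ satisfies S1(𝒜, O) for a family 𝒜 of open covers with the property that each cover in 𝒜 is a cover by open sets of its target set. Then X = A ∪ Q satisfies S1(𝒜, O), where 𝒜 consists of γ-covers (or more generally any type of open covers that restrict to covers of subsets). -/
/-- The selection principle `S1(𝒜, O)` for the class of covers `P`: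
`P Z` is the collection of ℕ-indexed covers of `Z` belonging to the class. -/
def S1Cls (P : Set ℝ → Set (ℕ → Set ℝ)) (Z : Set ℝ) : Prop :=
  ∀ U : ℕ → ℕ → Set ℝ, (∀ n, U n ∈ P Z) → ∃ f : ℕ → ℕ, Z ⊆ ⋃ n, U n (f n)

theorem stmt12 (P : Set ℝ → Set (ℕ → Set ℝ)) (X Q : Set ℝ) (κ : Cardinal)
    (hQX : Q ⊆ X) (hQc : Q.Countable)
    -- X is κ-concentrated on Q:
    (hconc : ∀ U : Set ℝ, IsOpen U → Q ⊆ U → Cardinal.mk ↥((X \ Q) \ U) < κ)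
    -- each cover in the class is a cover of its target set by open sets:
    (hPopen : ∀ Z : Set ℝ, ∀ U ∈ P Z, (∀ n, IsOpen (U n)) ∧ Z ⊆ ⋃ n, U n)
    -- covers in the class restrict to covers of subsets:
    (hPmono : ∀ Z W : Set ℝ, W ⊆ Z → ∀ U ∈ P Z, U ∈ P W)
    -- every set of reals of size < κ satisfies S1(𝒜, O):
    (hsmall : ∀ W : Set ℝ, Cardinal.mk ↥W < κ → S1Cls P W) :
    S1Cls P X := by
  intro U hU
  rcases Q.eq_empty_or_nonempty with hQe | hQne
  · -- Q empty: X itself is small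
    have hX : Cardinal.mk ↥X < κ := by
      have := hconc ∅ isOpen_empty (by simp [hQe])
      simpa [hQe] using this
    exact hsmall X hX U (fun n => hPmono X X (subset_refl _) _ (hU n))
  · obtain ⟨q, hq⟩ := Set.Countable.exists_eq_range hQc hQne
    -- choose even-indexed sets covering Q pointwise
    have hchoice : ∀ n : ℕ, ∃ k, q n ∈ U (2 * n) k := by
      intro n
      have hqX : q n ∈ X := hQX (by rw [hq]; exact ⟨n, rfl⟩)
      have := (hPopen X _ (hU (2 * n))).2 hqX
      simpa using this
    choose g hg using hchoice
    set V : Set ℝ := ⋃ n, U (2 * n) (g n) with hV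
    have hVopen : IsOpen V := isOpen_iUnion fun n => (hPopen X _ (hU (2 * n))).1 _
    have hQV : Q ⊆ V := by
      intro x hx
      rw [hq] at hx
      obtain ⟨n, rfl⟩ := hx
      exact Set.mem_iUnion.mpr ⟨n, hg n⟩
    set W : Set ℝ := (X \ Q) \ V with hW
    have hWX : W ⊆ X := fun x hx => hx.1.1
    have hWsmall : Cardinal.mk ↥W < κ := hconc V hVopen hQV
    obtain ⟨f, hf⟩ := hsmall W hWsmall (fun n => U (2 * n + 1))
      (fun n => hPmono X W hWX _ (hU (2 * n + 1)))
    refine ⟨fun m => if Even m then g (m / 2) else f (m / 2), ?_⟩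
    intro x hx
    by_cases hxV : x ∈ V
    · obtain ⟨n, hn⟩ := Set.mem_iUnion.mp hxV
      refine Set.mem_iUnion.mpr ⟨2 * n, ?_⟩
      have : Even (2 * n) := even_two_mul n
      simp only [this, if_pos]
      simpa [Nat.mul_div_cancel_left n (by norm_num : 0 < 2)] using hn
    · have hxW : x ∈ W := by
        refine ⟨⟨hx, ?_⟩, hxV⟩
        intro hxQ; exact hxV (hQV hxQ)
      obtain ⟨n, hn⟩ := Set.mem_iUnion.mp (hf hxW)
      refine Set.mem_iUnion.mpr ⟨2 * n + 1, ?_⟩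
      have hodd : ¬ Even (2 * n + 1) := by simp [Nat.even_add_one, Nat.even_mul]
      simp only [hodd, if_neg, if_false]
      have : (2 * n + 1) / 2 = n := by omega
      simpa [this] using hn
end

section
/- There exists a dominating family D = {g_α : α < 𝔡} ⊆ ℕ^ℕ of increasing functions such that for each f ∈ ℕ^ℕ there is α₀ < 𝔡 with the property: for every finite set F ⊆ 𝔡 \ α₀, the set {n : f(n) < min{g_β(n) : β ∈ F}} is infinite. -/
open Filter

def Dominating (D : Set (ℕ → ℕ)) : Prop := ∀ g : ℕ → ℕ, ∃ f ∈ D, LeStar g f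

/-- The dominating number 𝔡. -/
noncomputable def dCard : Cardinal :=
  sInf {c : Cardinal | ∃ D : Set (ℕ → ℕ), Dominating D ∧ Cardinal.mk ↥D = c}

namespace Stmt14Aux

open Set Cardinal

lemma dominating_univ : Dominating (Set.univ : Set (ℕ → ℕ)) :=
  fun g => ⟨g, trivial, Filter.Eventually.of_forall fun _ => le_rfl⟩

lemma dSet_nonempty :
    {c : Cardinal | ∃ D : Set (ℕ → ℕ), Dominating D ∧ Cardinal.mk ↥D = c}.Nonempty :=
  ⟨_, Set.univ, dominating_univ, rfl⟩

lemma exists_dom : ∃ D : Set (ℕ → ℕ), Dominating D ∧ #↥D = dCard :=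
  csInf_mem dSet_nonempty

lemma dCard_le_of_dominating {D : Set (ℕ → ℕ)} (hD : Dominating D) : dCard ≤ #↥D :=
  csInf_le' ⟨D, hD, rfl⟩

lemma not_dominating_of_countable {D : Set (ℕ → ℕ)} (h : #↥D ≤ Cardinal.aleph0) :
    ¬ Dominating D := by
  intro hD
  have hc : Countable ↥D := Cardinal.mk_le_aleph0_iff.mp h
  have hne : Nonempty ↥D := by
    obtain ⟨d, hd, -⟩ := hD 0
    exact ⟨⟨d, hd⟩⟩
  obtain ⟨u, hu⟩ := exists_surjective_nat ↥D
  set diag : ℕ → ℕ := fun n => (Finset.range (n + 1)).sup (fun i => (u i : ℕ → ℕ) n) + 1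
  obtain ⟨d, hd, hle⟩ := hD diag
  obtain ⟨i, hi⟩ := hu ⟨d, hd⟩
  obtain ⟨N, hN⟩ := Filter.eventually_atTop.mp hle
  have h1 : diag (max N i) ≤ d (max N i) := hN _ (le_max_left _ _)
  have h2 : d (max N i) < diag (max N i) := by
    have : d (max N i) ≤ (Finset.range (max N i + 1)).sup (fun j => (u j : ℕ → ℕ) (max N i)) := by
      have : (u i : ℕ → ℕ) (max N i) ≤ _ :=
        Finset.le_sup (f := fun j => (u j : ℕ → ℕ) (max N i))
          (Finset.mem_range.mpr (Nat.lt_succ_of_le (le_max_right N i)))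
      simpa [hi] using this
    have h4 : diag (max N i) = (Finset.range (max N i + 1)).sup (fun j => (u j : ℕ → ℕ) (max N i)) + 1 := rfl
    omega
  omega

lemma aleph0_lt_dCard : Cardinal.aleph0 < dCard := by
  have : Order.succ Cardinal.aleph0 ≤ dCard := by
    refine le_csInf dSet_nonempty ?_
    rintro c ⟨D, hD, rfl⟩
    rw [Order.succ_le_iff]
    by_contra hc
    exact not_dominating_of_countable (not_lt.mp hc) hD
  exact lt_of_lt_of_le (Order.lt_succ _) this

lemma exists_frequently {ι : Type} (hι : #ι < dCard) (G : ι → ℕ → ℕ) :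
    ∃ c₀ : ℕ → ℕ, ∀ i, ∃ᶠ j in atTop, G i j < c₀ j := by
  by_contra hcon
  push_neg at hcon
  have hd : Dominating (Set.range G) := by
    intro x
    obtain ⟨i, hi⟩ := hcon x
    exact ⟨G i, Set.mem_range_self i, hi⟩
  have h1 := dCard_le_of_dominating hd
  have h2 : #↥(Set.range G) ≤ #ι := Cardinal.mk_range_le
  exact absurd (h1.trans h2) (not_le.mpr hι)

lemma mk_finset_lt {τ : Type} (hτ : #τ < dCard) : #(Finset τ) < dCard := by
  cases finite_or_infinite τ with
  | inl h =>
    haveI := Fintype.ofFinite τ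
    exact lt_trans (Cardinal.lt_aleph0_of_finite (Finset τ)) aleph0_lt_dCard
  | inr h => rwa [Cardinal.mk_finset_of_infinite]

abbrev K : Type := dCard.ord.ToType

lemma mk_Iic_lt (ρ : K) : #↥(Set.Iic ρ) < dCard := by
  have h1 : #↥(Set.Iio ρ) < dCard := Cardinal.mk_Iio_ord_toType ρ
  have h2 : Set.Iic ρ = insert ρ (Set.Iio ρ) := Set.Iio_insert.symm
  rw [h2]
  exact lt_of_le_of_lt Cardinal.mk_insert_le
    (Cardinal.add_lt_of_lt aleph0_lt_dCard.le h1 (lt_trans Cardinal.one_lt_aleph0 aleph0_lt_dCard))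

end Stmt14Aux
namespace Stmt14Aux

open Set Cardinal

def GoodP (h : K → ℕ → ℕ) (ρ : K) (prev : K → ℕ → ℕ) (x : ℕ → ℕ) : Prop :=
  ∀ S : Finset (K × K), (∀ p ∈ S, p.1 ≤ p.2 ∧ p.2 < ρ) →
  ∀ H : Finset K, (∀ γ ∈ H, γ ≤ ρ) →
  {n : ℕ | (∀ p ∈ S, h p.1 n < prev p.2 n) ∧ (∀ γ ∈ H, h γ n < x n)}.Infinite

lemma goodP_agree {h : K → ℕ → ℕ} {ρ : K} {prev₁ prev₂ : K → ℕ → ℕ} {x : ℕ → ℕ}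
    (hag : ∀ β, β < ρ → prev₁ β = prev₂ β) (hg : GoodP h ρ prev₁ x) : GoodP h ρ prev₂ x := by
  intro S hS H hH
  refine (hg S hS H hH).mono ?_
  rintro n ⟨hn1, hn2⟩
  exact ⟨fun p hp => (hag p.2 (hS p hp).2) ▸ hn1 p hp, hn2⟩

lemma exists_goodP (h : K → ℕ → ℕ) (ρ : K) (prev : K → ℕ → ℕ)
    (hinv : ∀ S : Finset (K × K), (∀ p ∈ S, p.1 ≤ p.2 ∧ p.2 < ρ) →
      {n : ℕ | ∀ p ∈ S, h p.1 n < prev p.2 n}.Infinite) :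
    ∃ x, GoodP h ρ prev x := by
  classical
  set I : Type := ↥(Set.Iic ρ) with hIdef
  let dS : Finset (I × I) × Finset I → Finset (K × K) :=
    fun t => t.1.image fun p => ((p.1 : K), (p.2 : K))
  let dH : Finset (I × I) × Finset I → Finset K := fun t => t.2.image Subtype.val
  let X : Finset (I × I) × Finset I → Set ℕ := fun t => {n | ∀ p ∈ dS t, h p.1 n < prev p.2 n}
  let G : Finset (I × I) × Finset I → ℕ → ℕ := fun t j =>
    if ht : (X t).Infinite then (dH t).sup h (Nat.nth (· ∈ X t) j) else 0
  have hI : #I < dCard := mk_Iic_lt ρ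
  have hII : #(I × I) < dCard := by
    simp only [Cardinal.mk_prod, Cardinal.lift_id]
    exact Cardinal.mul_lt_of_lt aleph0_lt_dCard.le hI hI
  have hσ : #(Finset (I × I) × Finset I) < dCard := by
    simp only [Cardinal.mk_prod, Cardinal.lift_id]
    exact Cardinal.mul_lt_of_lt aleph0_lt_dCard.le (mk_finset_lt hII) (mk_finset_lt hI)
  obtain ⟨c₀, hc₀⟩ := exists_frequently hσ G
  refine ⟨fun n => (Finset.range (n + 1)).sup c₀, ?_⟩
  intro S hS H hH
  -- encode
  let t : Finset (I × I) × Finset I :=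
    ⟨S.attach.image fun p =>
        ((⟨p.1.1, le_of_lt (lt_of_le_of_lt (hS p.1 p.2).1 (hS p.1 p.2).2)⟩ : I),
         (⟨p.1.2, le_of_lt (hS p.1 p.2).2⟩ : I)),
     H.attach.image fun γ => (⟨γ.1, hH γ.1 γ.2⟩ : I)⟩
  have hdS : dS t = S := by
    ext a
    constructor
    · intro ha
      obtain ⟨p, hp, rfl⟩ := Finset.mem_image.mp ha
      obtain ⟨q, _, rfl⟩ := Finset.mem_image.mp hp
      simpa using q.2
    · intro ha
      exact Finset.mem_image.mpr ⟨_, Finset.mem_image.mpr ⟨⟨a, ha⟩, Finset.mem_attach _ _, rfl⟩, rfl⟩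
  have hdH : dH t = H := by
    ext a
    constructor
    · intro ha
      obtain ⟨p, hp, rfl⟩ := Finset.mem_image.mp ha
      obtain ⟨q, _, rfl⟩ := Finset.mem_image.mp hp
      exact q.2
    · intro ha
      exact Finset.mem_image.mpr ⟨_, Finset.mem_image.mpr ⟨⟨a, ha⟩, Finset.mem_attach _ _, rfl⟩, rfl⟩
  have hXeq : X t = {n : ℕ | ∀ p ∈ S, h p.1 n < prev p.2 n} := by rw [← hdS]
  have hXinf : (X t).Infinite := by rw [hXeq]; exact hinv S hS
  refine Set.infinite_of_forall_exists_gt ?_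
  intro a
  obtain ⟨j, hja, hjlt⟩ := Filter.frequently_atTop.mp (hc₀ t) (a + 1)
  set n := Nat.nth (· ∈ X t) j with hn
  have hmem : n ∈ X t := Nat.nth_mem_of_infinite (p := (· ∈ X t)) hXinf j
  have hjn : j ≤ n := (Nat.nth_strictMono (p := (· ∈ X t)) hXinf).le_apply
  have hmem' : ∀ p ∈ S, h p.1 n < prev p.2 n := by rw [hXeq] at hmem; exact hmem
  refine ⟨n, ⟨hmem', ?_⟩, lt_of_lt_of_le hja hjn⟩
  intro γ hγ
  have h1 : h γ n ≤ (dH t).sup h n := by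
    have hle : h γ ≤ (dH t).sup h := Finset.le_sup (by rw [hdH]; exact hγ)
    exact hle n
  have h2 : G t j = (dH t).sup h n := by
    show (if ht : (X t).Infinite then (dH t).sup h (Nat.nth (· ∈ X t) j) else 0) = _
    rw [dif_pos hXinf]
  have h3 : c₀ j ≤ (Finset.range (n + 1)).sup c₀ :=
    Finset.le_sup (Finset.mem_range.mpr (Nat.lt_succ_of_le hjn))
  calc h γ n ≤ G t j := h2 ▸ h1
    _ < c₀ j := hjlt
    _ ≤ _ := h3

end Stmt14Aux
namespace Stmt14Aux

open Set Cardinal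

attribute [local instance] Classical.propDecidable

noncomputable def cfun (h : K → ℕ → ℕ) : K → ℕ → ℕ :=
  WellFounded.fix (IsWellFounded.wf (r := ((· < ·) : K → K → Prop))) fun ρ prev =>
    if hx : ∃ x, GoodP h ρ (fun β => if hb : β < ρ then prev β hb else fun _ => 0) x then
      hx.choose
    else fun _ => 0

lemma cfun_eq (h : K → ℕ → ℕ) (ρ : K) :
    cfun h ρ =
      if hx : ∃ x, GoodP h ρ (fun β => if _ : β < ρ then cfun h β else fun _ => 0) x then
        hx.choose
      else fun _ => 0 := by
  show WellFounded.fix _ _ ρ = _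
  rw [WellFounded.fix_eq]
  rfl

lemma cfun_invariant (h : K → ℕ → ℕ) (ρ : K) :
    ∀ S : Finset (K × K), (∀ p ∈ S, p.1 ≤ p.2 ∧ p.2 ≤ ρ) →
      {n : ℕ | ∀ p ∈ S, h p.1 n < cfun h p.2 n}.Infinite := by
  induction ρ using WellFoundedLT.induction with
  | ind ρ IH =>
    intro S hS
    have hinv : ∀ S₀ : Finset (K × K), (∀ p ∈ S₀, p.1 ≤ p.2 ∧ p.2 < ρ) →
        {n : ℕ | ∀ p ∈ S₀, h p.1 n < cfun h p.2 n}.Infinite := by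
      intro S₀ hS₀
      rcases S₀.eq_empty_or_nonempty with rfl | hne
      · have : {n : ℕ | ∀ p ∈ (∅ : Finset (K × K)), h p.1 n < cfun h p.2 n} = Set.univ := by
          ext n; simp
        rw [this]; exact Set.infinite_univ
      · have hne' : (S₀.image Prod.snd).Nonempty := hne.image _
        obtain ⟨p₀, hp₀, hp₀eq⟩ := Finset.mem_image.mp ((S₀.image Prod.snd).max'_mem hne')
        refine IH _ (hp₀eq ▸ (hS₀ p₀ hp₀).2) S₀ ?_
        intro p hp
        exact ⟨(hS₀ p hp).1, Finset.le_max' _ _ (Finset.mem_image_of_mem _ hp)⟩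
    have hex : ∃ x, GoodP h ρ (cfun h) x := exists_goodP h ρ (cfun h) hinv
    have hex' : ∃ x, GoodP h ρ (fun β => if _ : β < ρ then cfun h β else fun _ => 0) x := by
      obtain ⟨x, hx⟩ := hex
      exact ⟨x, goodP_agree (fun β hb => by rw [dif_pos hb]) hx⟩
    have hgood : GoodP h ρ (cfun h) (cfun h ρ) := by
      rw [cfun_eq h ρ, dif_pos hex']
      exact goodP_agree (fun β hb => by rw [dif_pos hb]) hex'.choose_spec
    classical
    set S' := S.filter (fun p => p.2 < ρ) with hS'
    set H := (S.filter (fun p => ¬ p.2 < ρ)).image Prod.fst with hHdef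
    have hcond : ∀ p ∈ S', p.1 ≤ p.2 ∧ p.2 < ρ := by
      intro p hp
      obtain ⟨hp1, hp2⟩ := Finset.mem_filter.mp hp
      exact ⟨(hS p hp1).1, hp2⟩
    have hcond' : ∀ γ ∈ H, γ ≤ ρ := by
      intro γ hγ
      obtain ⟨p, hp, rfl⟩ := Finset.mem_image.mp hγ
      obtain ⟨hp1, _⟩ := Finset.mem_filter.mp hp
      exact le_trans (hS p hp1).1 (hS p hp1).2
    refine (hgood S' hcond H hcond').mono ?_
    rintro n ⟨hn1, hn2⟩
    intro p hp
    by_cases hlt : p.2 < ρ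
    · exact hn1 p (Finset.mem_filter.mpr ⟨hp, hlt⟩)
    · have hpρ : p.2 = ρ := le_antisymm (hS p hp).2 (not_lt.mp hlt)
      have := hn2 p.1 (Finset.mem_image_of_mem _ (Finset.mem_filter.mpr ⟨hp, hlt⟩))
      rw [hpρ]
      exact this

lemma global_invariant (h : K → ℕ → ℕ) (S : Finset (K × K)) (hS : ∀ p ∈ S, p.1 ≤ p.2) :
    {n : ℕ | ∀ p ∈ S, h p.1 n < cfun h p.2 n}.Infinite := by
  rcases S.eq_empty_or_nonempty with rfl | hne
  · have : {n : ℕ | ∀ p ∈ (∅ : Finset (K × K)), h p.1 n < cfun h p.2 n} = Set.univ := by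
      ext n; simp
    rw [this]; exact Set.infinite_univ
  · have hne' : (S.image Prod.snd).Nonempty := hne.image _
    refine cfun_invariant h ((S.image Prod.snd).max' hne') S ?_
    intro p hp
    exact ⟨hS p hp, Finset.le_max' _ _ (Finset.mem_image_of_mem _ hp)⟩

end Stmt14Aux

theorem stmt14 :
    ∃ g : dCard.ord.ToType → ℕ → ℕ,
      (∀ α, StrictMono (g α)) ∧
      Dominating (Set.range g) ∧
      ∀ f : ℕ → ℕ, ∃ α₀ : dCard.ord.ToType,
        ∀ F : Finset dCard.ord.ToType, (∀ β ∈ F, α₀ ≤ β) →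
          {n : ℕ | ∀ β ∈ F, f n < g β n}.Infinite := by
  classical
  obtain ⟨D, hD, hmk⟩ := Stmt14Aux.exists_dom
  have hKcard : Cardinal.mk ↥D = Cardinal.mk Stmt14Aux.K := by
    rw [hmk, Stmt14Aux.K, Cardinal.mk_ord_toType]
  obtain ⟨e⟩ := Cardinal.eq.mp hKcard
  set h : Stmt14Aux.K → ℕ → ℕ := fun γ => (e.symm γ : ℕ → ℕ) with hh
  have hdom : ∀ f : ℕ → ℕ, ∃ γ, LeStar f (h γ) := by
    intro f
    obtain ⟨d, hd, hle⟩ := hD f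
    refine ⟨e ⟨d, hd⟩, ?_⟩
    have : h (e ⟨d, hd⟩) = d := by rw [hh]; simp
    rw [this]
    exact hle
  set c : Stmt14Aux.K → ℕ → ℕ := Stmt14Aux.cfun h with hc
  set g : Stmt14Aux.K → ℕ → ℕ :=
    fun β n => n + (Finset.range (n + 1)).sup (fun k => max (h β k) (c β k)) with hg
  have hmono : ∀ β, Monotone fun n => (Finset.range (n + 1)).sup (fun k => max (h β k) (c β k)) := by
    intro β m n hmn
    exact Finset.sup_mono (Finset.range_subset_range.mpr (by omega))
  have hgh : ∀ β n, h β n ≤ g β n := by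
    intro β n
    have : max (h β n) (c β n) ≤ (Finset.range (n + 1)).sup (fun k => max (h β k) (c β k)) :=
      Finset.le_sup (f := fun k => max (h β k) (c β k)) (Finset.self_mem_range_succ n)
    simp only [hg]
    omega
  have hgc : ∀ β n, c β n ≤ g β n := by
    intro β n
    have : max (h β n) (c β n) ≤ (Finset.range (n + 1)).sup (fun k => max (h β k) (c β k)) :=
      Finset.le_sup (f := fun k => max (h β k) (c β k)) (Finset.self_mem_range_succ n)
    simp only [hg]
    omega
  refine ⟨g, ?_, ?_, ?_⟩
  · intro β m n hmn
    simp only [hg]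
    exact add_lt_add_of_lt_of_le hmn (hmono β (le_of_lt hmn))
  · intro f
    obtain ⟨γ, hγ⟩ := hdom f
    exact ⟨g γ, Set.mem_range_self γ, hγ.mono fun n hn => le_trans hn (hgh γ n)⟩
  · intro f
    obtain ⟨γ, hγ⟩ := hdom f
    refine ⟨γ, ?_⟩
    intro F hF
    have hSinv := Stmt14Aux.global_invariant h (F.image fun β => (γ, β)) ?_
    swap
    · intro p hp
      obtain ⟨β, hβ, rfl⟩ := Finset.mem_image.mp hp
      exact hF β hβ
    have hfin : {n : ℕ | ¬ f n ≤ h γ n}.Finite := by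
      have hγ' : ∀ᶠ n in Filter.atTop, f n ≤ h γ n := hγ
      rw [← Nat.cofinite_eq_atTop] at hγ'
      exact Filter.eventually_cofinite.mp hγ'
    refine (hSinv.diff hfin).mono ?_
    rintro n ⟨hn1, hn2⟩
    intro β hβ
    have h1 : f n ≤ h γ n := not_not.mp hn2
    have h2 : h γ n < c β n := hn1 (γ, β) (Finset.mem_image_of_mem _ hβ)
    exact lt_of_le_of_lt h1 (lt_of_lt_of_le h2 (hgc β n))
end

section
/- If 𝔟 = 𝔡, then a union of fewer than 𝔡 many non-dominating subsets of ℕ^ℕ is not dominating. -/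
open Filter

def BddStar (B : Set (ℕ → ℕ)) : Prop := ∃ g : ℕ → ℕ, ∀ f ∈ B, LeStar f g

/-- The unbounding number 𝔟. -/
noncomputable def bCard : Cardinal :=
  sInf {c : Cardinal | ∃ B : Set (ℕ → ℕ), ¬ BddStar B ∧ Cardinal.mk ↥B = c}

theorem stmt15 (h : bCard = dCard) (ι : Type) (D : ι → Set (ℕ → ℕ))
    (hcard : Cardinal.mk ι < dCard) (hnd : ∀ i, ¬ Dominating (D i)) :
    ¬ Dominating (⋃ i, D i) := by
  intro hdom
  -- choose witnesses not dominated by each D i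
  have hg : ∀ i, ∃ g : ℕ → ℕ, ∀ f ∈ D i, ¬ LeStar g f := by
    intro i
    have := hnd i
    simpa [Dominating, not_exists] using this
  choose g hgspec using hg
  -- the range of g is bounded since |ι| < 𝔡 = 𝔟
  have hbdd : BddStar (Set.range g) := by
    by_contra hnb
    have : bCard ≤ Cardinal.mk ↥(Set.range g) :=
      csInf_le' ⟨Set.range g, hnb, rfl⟩
    have hlt : Cardinal.mk ↥(Set.range g) < bCard := by
      rw [h]
      exact lt_of_le_of_lt Cardinal.mk_range_le hcard
    exact absurd this (not_le.mpr hlt)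
  obtain ⟨G, hG⟩ := hbdd
  obtain ⟨f, hfmem, hGf⟩ := hdom G
  obtain ⟨_, ⟨i, rfl⟩, hfi⟩ := hfmem
  have hgi : LeStar (g i) G := hG (g i) ⟨i, rfl⟩
  exact hgspec i f hfi ((hgi.and hGf).mono fun n ⟨h1, h2⟩ => le_trans h1 h2)
end
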